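/- Let G be a profinite group, H an open subgroup of G, and Σ₁,…,Σₖ ⊆ H measurable sets that are independent with respect to the probability Haar measure μ_H on H. Let S ⊆ G be a set of representatives of the left cosets G/H, and set Σᵢ* = ⋃_{g∈S} gΣᵢ. Then Σ₁*,…,Σₖ* are independent with respect to the probability Haar measure μ_G on G, and moreover μ_G(Σᵢ*) = μ_H(Σᵢ) for each i. -/

import Mathlib

open MeasureTheory
open scoped ENNReal NNReal

/-- Let `G` be a profinite group, `H ≤ G` an open subgroup, `Σ₁,…,Σₖ ⊆ H` measurable
sets that are independent for the probability Haar measure `μH` of `H`, and `S ⊆ G` a set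
of representatives of the left cosets `G/H`. Then the sets `Σᵢ* = ⋃_{g ∈ S} gΣᵢ` are
independent for the probability Haar measure `μG` of `G`, and `μG(Σᵢ*) = μH(Σᵢ)`. -/
theorem haar_independence_of_translates
    (G : Type*) [Group G] [TopologicalSpace G] [IsTopologicalGroup G]
    [CompactSpace G] [TotallyDisconnectedSpace G] [T2Space G]
    [MeasurableSpace G] [BorelSpace G]
    (H : Subgroup G) (hHopen : IsOpen (H : Set G))
    [MeasurableSpace ↥H] [BorelSpace ↥H]
    (μG : Measure G) [μG.IsHaarMeasure] [IsProbabilityMeasure μG]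
    (μH : Measure ↥H) [μH.IsHaarMeasure] [IsProbabilityMeasure μH]
    (k : ℕ) (Sig : Fin k → Set ↥H) (hmeas : ∀ i, MeasurableSet (Sig i))
    (hindep : ∀ t : Finset (Fin k), μH (⋂ i ∈ t, Sig i) = ∏ i ∈ t, μH (Sig i))
    (S : Set G) (hS : ∀ g : G, ∃! s, s ∈ S ∧ s⁻¹ * g ∈ H) :
    (∀ t : Finset (Fin k),
        μG (⋂ i ∈ t, ⋃ s ∈ S, (s * ·) '' (Subtype.val '' Sig i)) =
          ∏ i ∈ t, μG (⋃ s ∈ S, (s * ·) '' (Subtype.val '' Sig i))) ∧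
      ∀ i, μG (⋃ s ∈ S, (s * ·) '' (Subtype.val '' Sig i)) = μH (Sig i) := by
  classical
  -- images under left multiplication are preimages
  have himg : ∀ (s : G) (X : Set G), (s * ·) '' X = (s⁻¹ * ·) ⁻¹' X := by
    intro s X
    ext g
    constructor
    · rintro ⟨x, hx, rfl⟩
      simpa [inv_mul_cancel_left] using hx
    · intro h
      exact ⟨s⁻¹ * g, h, by simp [mul_inv_cancel_left]⟩
  have hHmeas : MeasurableSet (H : Set G) := hHopen.measurableSet
  have hMS : ‹MeasurableSpace ↥H› = Subtype.instMeasurableSpace := by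
    rw [‹BorelSpace ↥H›.measurable_eq,
      (Subtype.borelSpace (H : Set G)).measurable_eq]
    rfl
  have hval : MeasurableEmbedding (Subtype.val : ↥H → G) := by
    have h := MeasurableEmbedding.subtype_coe hHmeas
    rwa [← hMS] at h
  have hHne : μG (H : Set G) ≠ 0 := (hHopen.measure_pos μG ⟨1, H.one_mem⟩).ne'
  have hHfin : μG (H : Set G) ≠ ⊤ := measure_ne_top μG _
  have hHclosed : IsClosed (H : Set G) := H.isClosed_of_isOpen hHopen
  haveI : CompactSpace ↥H := isCompact_iff_compactSpace.mp (hHclosed.isCompact)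
  -- the comparison measure on H
  set ν : Measure ↥H := (μG (H : Set G))⁻¹ • (μG.comap Subtype.val) with hνdef
  have hνapp : ∀ A : Set ↥H, ν A = (μG (H : Set G))⁻¹ * μG (Subtype.val '' A) := by
    intro A
    rw [hνdef, Measure.smul_apply, hval.comap_apply, smul_eq_mul]
  haveI hνinv : ν.IsMulLeftInvariant := by
    constructor
    intro h
    ext A hA
    rw [Measure.map_apply (measurable_const_mul h) hA, hνapp, hνapp]
    congr 1
    have himg2 : Subtype.val '' ((h * ·) ⁻¹' A) = ((h : G) * ·) ⁻¹' (Subtype.val '' A) := by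
      ext g
      constructor
      · rintro ⟨x, hx, rfl⟩
        exact ⟨h * x, hx, rfl⟩
      · rintro ⟨x, hx, hg⟩
        refine ⟨h⁻¹ * x, ?_, ?_⟩
        · simpa [Set.mem_preimage, mul_inv_cancel_left] using hx
        · have : (h : G) * g = (x : G) := hg.symm
          simp [Subgroup.coe_mul, ← this, inv_mul_cancel_left]
    rw [himg2]
    exact measure_preimage_mul μG (h : G) _
  haveI hνprob : IsProbabilityMeasure ν := by
    constructor
    rw [hνapp, Set.image_univ, Subtype.range_coe]
    exact ENNReal.inv_mul_cancel hHne hHfin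
  -- ν = μH by uniqueness of Haar probability measures on the compact group H
  have hνμH : ∀ A : Set ↥H, ν A = μH A := by
    have h1 := Measure.isMulInvariant_eq_smul_of_compactSpace ν μH
    set c := Measure.haarScalarFactor ν μH with hc
    have hcone : (c : ℝ≥0∞) = 1 := by
      have := congrArg (fun m : Measure ↥H => m Set.univ) h1
      simp only [Measure.smul_apply, measure_univ, ENNReal.smul_def, smul_eq_mul, mul_one] at this
      exact this.symm
    intro A
    have := congrArg (fun m : Measure ↥H => m A) h1
    simpa [ENNReal.smul_def, hcone, one_mul] using this
  -- cosets of distinct elements of S are disjoint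
  have hdisjS : ∀ s₁ ∈ S, ∀ s₂ ∈ S, s₁ ≠ s₂ →
      Disjoint ((s₁ * ·) '' (H : Set G)) ((s₂ * ·) '' (H : Set G)) := by
    intro s₁ hs₁ s₂ hs₂ hne
    rw [Set.disjoint_left]
    rintro g hg1 hg2
    rw [himg, Set.mem_preimage] at hg1 hg2
    exact hne (((hS g).unique ⟨hs₁, hg1⟩ ⟨hs₂, hg2⟩))
  -- S covers G by the coset decomposition
  have hcover : ∀ g : G, ∃ s ∈ S, g ∈ (s * ·) '' (H : Set G) := by
    intro g
    obtain ⟨s, ⟨hsS, hsg⟩, -⟩ := hS g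
    exact ⟨s, hsS, by rw [himg]; exact hsg⟩
  -- S is finite
  have hSfin : S.Finite := by
    obtain ⟨T, hT⟩ := isCompact_univ.elim_finite_subcover
      (fun s : S => ((s : G) * ·) '' (H : Set G))
      (fun s => by
        simp only [himg]
        exact hHopen.preimage (continuous_mul_left _))
      (by
        intro g _
        obtain ⟨s, hsS, hgs⟩ := hcover g
        exact Set.mem_iUnion.2 ⟨⟨s, hsS⟩, hgs⟩)
    refine Set.Finite.subset (T.finite_toSet.image Subtype.val) ?_
    intro s hs
    obtain ⟨t, htT, hst⟩ := Set.mem_iUnion₂.1 (hT (Set.mem_univ s))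
    rw [himg, Set.mem_preimage] at hst
    have : (t : G) = s := (hS s).unique ⟨t.2, hst⟩ ⟨hs, by simpa using H.one_mem⟩
    exact ⟨t, htT, this⟩
  set F : Finset G := hSfin.toFinset with hF
  have hFS : ∀ s, s ∈ F ↔ s ∈ S := fun s => hSfin.mem_toFinset
  -- key computation: the measure of the union of translates
  have key : ∀ B : Set ↥H, MeasurableSet B →
      μG (⋃ s ∈ S, (s * ·) '' (Subtype.val '' B)) = (F.card : ℝ≥0∞) * μG (Subtype.val '' B) := by
    intro B hB
    have hBH : (Subtype.val '' B : Set G) ⊆ (H : Set G) := by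
      rintro g ⟨x, -, rfl⟩; exact x.2
    have hBmeas : MeasurableSet (Subtype.val '' B : Set G) := hval.measurableSet_image.2 hB
    have hSeq : S = (F : Set G) := by ext s; simp [hFS]
    have hdisj' : ((F : Set G)).PairwiseDisjoint (fun s => (s * ·) '' (Subtype.val '' B)) := by
      intro s₁ hs₁ s₂ hs₂ hne
      exact Set.disjoint_of_subset (Set.image_mono hBH) (Set.image_mono hBH)
        (hdisjS s₁ ((hFS s₁).1 hs₁) s₂ ((hFS s₂).1 hs₂) hne)
    have hmeas' : ∀ s ∈ F, MeasurableSet ((s * ·) '' (Subtype.val '' B)) := by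
      intro s _
      rw [himg]
      exact hBmeas.preimage (measurable_const_mul _)
    have hsum : ∀ s ∈ F, μG ((s * ·) '' (Subtype.val '' B)) = μG (Subtype.val '' B) := by
      intro s _
      rw [himg]
      exact measure_preimage_mul μG s⁻¹ _
    rw [hSeq, Finset.set_biUnion_coe, measure_biUnion_finset hdisj' hmeas',
      Finset.sum_congr rfl hsum]
    simp [Finset.sum_const, mul_comm]
  -- the total mass identity : card F * μG H = 1
  have htotal : (F.card : ℝ≥0∞) * μG (H : Set G) = 1 := by
    have h1 := key Set.univ MeasurableSet.univ
    have h2 : (Subtype.val '' (Set.univ : Set ↥H) : Set G) = (H : Set G) := by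
      ext g
      constructor
      · rintro ⟨x, -, rfl⟩; exact x.2
      · intro hg; exact ⟨⟨g, hg⟩, trivial, rfl⟩
    have h3 : (⋃ s ∈ S, (s * ·) '' (H : Set G)) = Set.univ :=
      Set.eq_univ_iff_forall.2 fun g => by
        obtain ⟨s, hsS, hgs⟩ := hcover g
        exact Set.mem_biUnion hsS hgs
    rw [h2, h3, measure_univ] at h1
    exact h1.symm
  have hcard : (F.card : ℝ≥0∞) = (μG (H : Set G))⁻¹ := by
    have h2 := congrArg (· * (μG (H : Set G))⁻¹) htotal
    simpa [mul_assoc, ENNReal.mul_inv_cancel hHne hHfin] using h2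
  -- the main identity
  have key2 : ∀ B : Set ↥H, MeasurableSet B →
      μG (⋃ s ∈ S, (s * ·) '' (Subtype.val '' B)) = μH B := by
    intro B hB
    rw [key B hB, hcard, ← hνapp, hνμH]
  refine ⟨?_, fun i => key2 (Sig i) (hmeas i)⟩
  intro t
  rcases t.eq_empty_or_nonempty with rfl | ⟨j, hj⟩
  · simp
  · have hinter : (⋂ i ∈ t, ⋃ s ∈ S, (s * ·) '' (Subtype.val '' Sig i))
        = ⋃ s ∈ S, (s * ·) '' (Subtype.val '' ⋂ i ∈ t, Sig i) := by
      ext g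
      constructor
      · intro hg
        obtain ⟨s₀, hs₀S, hgs₀⟩ := Set.mem_iUnion₂.1 (Set.mem_iInter₂.1 hg j hj)
        rw [himg, Set.mem_preimage] at hgs₀
        obtain ⟨x₀, hx₀, hval0⟩ := hgs₀
        have hgH : s₀⁻¹ * g ∈ H := hval0 ▸ x₀.2
        refine Set.mem_biUnion hs₀S ?_
        rw [himg, Set.mem_preimage]
        refine ⟨⟨s₀⁻¹ * g, hgH⟩, ?_, rfl⟩
        refine Set.mem_iInter₂.2 fun i hi => ?_
        obtain ⟨s, hsS, hgs⟩ := Set.mem_iUnion₂.1 (Set.mem_iInter₂.1 hg i hi)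
        rw [himg, Set.mem_preimage] at hgs
        obtain ⟨y, hy, hvy⟩ := hgs
        have hsH : s⁻¹ * g ∈ H := hvy ▸ y.2
        have hss : s = s₀ := (hS g).unique ⟨hsS, hsH⟩ ⟨hs₀S, hgH⟩
        have hyx : y = (⟨s₀⁻¹ * g, hgH⟩ : ↥H) := Subtype.ext (by rw [hvy, hss])
        exact hyx ▸ hy
      · intro hg
        obtain ⟨s, hsS, hgs⟩ := Set.mem_iUnion₂.1 hg
        rw [himg, Set.mem_preimage] at hgs
        obtain ⟨x, hx, hvx⟩ := hgs
        refine Set.mem_iInter₂.2 fun i hi => Set.mem_biUnion hsS ?_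
        rw [himg, Set.mem_preimage]
        exact ⟨x, Set.mem_iInter₂.1 hx i hi, hvx⟩
    rw [hinter, key2 (⋂ i ∈ t, Sig i) (Finset.measurableSet_biInter t fun i _ => hmeas i),
      hindep t]
    exact Finset.prod_congr rfl fun i _ => (key2 (Sig i) (hmeas i)).symm
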